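/- Let A ∈ M_n(ℂ) be h-cyclic in consecutive block form with cyclic block products B_i, and suppose B_i is singular. If x ∈ null(B_i), x ≠ 0, then there exists a positive integer p ≤ h such that B_{ip} x = 0 and B_{iq} x ≠ 0 for all 1 ≤ q < p; moreover, A has a Jordan chain of length p for the eigenvalue 0 (so any Jordan canonical form of A contains a p×p singular Jordan block). -/

import Mathlib

open Matrix

/-- `A` is `h`-cyclic with respect to the partition of indices given by the block-index
map `f` (vertex `x` lies in block `f x`): every nonzero entry goes from block `ℓ` to
block `ℓ + 1 (mod h)`. -/
def IsHCyclic {n h : ℕ} (A : Matrix (Fin n) (Fin n) ℂ) (f : Fin n → ZMod h) : Prop :=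
  ∀ i j, A i j ≠ 0 → f j = f i + 1

/-- The block `A_{ℓ,ℓ+1}` of `A`, zero-padded to full size: entries of `A` from block `ℓ`
to block `ℓ+1`, and `0` elsewhere. -/
noncomputable def blockM {n h : ℕ} (A : Matrix (Fin n) (Fin n) ℂ) (f : Fin n → ZMod h) (ℓ : ZMod h) :
    Matrix (Fin n) (Fin n) ℂ :=
  Matrix.of fun x y => if f x = ℓ ∧ f y = ℓ + 1 then A x y else 0

/-- The partial cyclic product `B_{ip} = A_{i-p,i-p+1} A_{i-p+1,i-p+2} ⋯ A_{i-1,i}`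
(indices mod `h`), i.e. `∏_{j=h+1-p}^{h} A_{α^{j-1}(i), α^{j}(i)}` where `α(i) = i+1 mod h`;
each factor is zero-padded to full size.  `B_i := B_{ih}` is the cyclic block product. -/
noncomputable def Bprod {n h : ℕ} (A : Matrix (Fin n) (Fin n) ℂ) (f : Fin n → ZMod h) (i : ZMod h)
    (p : ℕ) : Matrix (Fin n) (Fin n) ℂ :=
  ((List.range p).map fun j => blockM A f (i - (p : ZMod h) + (j : ZMod h))).prod

lemma bind_cast_eq {h : ℕ} (l : List ℕ) :
    (l >>= fun a => pure ((a : ZMod h)) : List (ZMod h)) = l.map Nat.cast := by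
  simp
  exact List.map_eq_flatMap.symm

lemma Bprod_eq {n h : ℕ} (A : Matrix (Fin n) (Fin n) ℂ) (f : Fin n → ZMod h) (i : ZMod h)
    (p : ℕ) : Bprod A f i p
      = ((List.range p).map fun j : ℕ => blockM A f (i - (p : ZMod h) + ((j : ℕ) : ZMod h))).prod := by
  unfold Bprod
  rw [bind_cast_eq, List.map_map]
  rfl

lemma Bprod_zero {n h : ℕ} (A : Matrix (Fin n) (Fin n) ℂ) (f : Fin n → ZMod h) (i : ZMod h) :
    Bprod A f i 0 = 1 := by
  rw [Bprod_eq]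
  simp

lemma Bprod_succ {n h : ℕ} (A : Matrix (Fin n) (Fin n) ℂ) (f : Fin n → ZMod h) (i : ZMod h)
    (q : ℕ) :
    Bprod A f i (q + 1) = blockM A f (i - ((q + 1 : ℕ) : ZMod h)) * Bprod A f i q := by
  rw [Bprod_eq, Bprod_eq, List.range_succ_eq_map, List.map_cons, List.prod_cons, List.map_map]
  congr 1
  · simp
  · refine congrArg List.prod (List.map_congr_left ?_)
    intro j hj
    simp only [Function.comp_apply]
    congr 1
    push_cast
    ring

/-- If `A` is `h`-cyclic in consecutive block form and `x ∈ null(B_i)`, `x ≠ 0` (encoded as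
the block vector `v` supported on block `i` with `B_{ih} v = 0`), then there is a positive
integer `p ≤ h` with `B_{ip} x = 0` and `B_{iq} x ≠ 0` for `1 ≤ q < p`; moreover `A` has a
Jordan chain of length `p` for the eigenvalue `0`. -/
theorem zero_jordan_chain {n h : ℕ} [NeZero h] (A : Matrix (Fin n) (Fin n) ℂ)
    (f : Fin n → ZMod h) (hcons : Monotone fun x : Fin n => (f x).val)
    (hA : IsHCyclic A f) (i : ZMod h) (v : Fin n → ℂ)
    (hv : ∀ y, f y ≠ i → v y = 0) (hv0 : v ≠ 0)
    (hnull : Bprod A f i h *ᵥ v = 0) :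
    ∃ p, 0 < p ∧ p ≤ h ∧ Bprod A f i p *ᵥ v = 0 ∧
      (∀ q, 0 < q → q < p → Bprod A f i q *ᵥ v ≠ 0) ∧
      ∃ w : ℕ → Fin n → ℂ, w 0 ≠ 0 ∧ A *ᵥ w 0 = 0 ∧
        ∀ k, k + 1 < p → A *ᵥ w (k + 1) = w k := by
  set u : ℕ → Fin n → ℂ := fun q => Bprod A f i q *ᵥ v with hu
  have hu0 : u 0 = v := by simp [hu, Bprod_zero]
  have husucc : ∀ q, u (q + 1) = blockM A f (i - ((q + 1 : ℕ) : ZMod h)) *ᵥ u q := by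
    intro q
    simp [hu, Bprod_succ, Matrix.mulVec_mulVec]
  -- support of `u q` is block `i - q`
  have supp : ∀ q x, f x ≠ i - ((q : ℕ) : ZMod h) → u q x = 0 := by
    intro q
    induction q with
    | zero =>
      intro x hx
      rw [hu0]
      apply hv
      simpa using hx
    | succ q ih =>
      intro x hx
      rw [husucc]
      simp only [mulVec, dotProduct, blockM, of_apply]
      apply Finset.sum_eq_zero
      intro y _
      rw [if_neg, zero_mul]
      rintro ⟨h1, -⟩
      exact hx h1
  -- `A` acts on `u q` as the next block map
  have hstepA : ∀ q, A *ᵥ u q = u (q + 1) := by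
    intro q
    rw [husucc]
    ext x
    simp only [mulVec, dotProduct, blockM, of_apply]
    apply Finset.sum_congr rfl
    intro y _
    by_cases hy : u q y = 0
    · rw [hy, mul_zero, mul_zero]
    · have hfy : f y = i - ((q : ℕ) : ZMod h) := by
        by_contra hne; exact hy (supp q y hne)
      by_cases hxy : A x y = 0
      · rw [hxy, zero_mul]
        split <;> simp
      · have hfyx := hA x y hxy
        have hfx : f x = i - ((q + 1 : ℕ) : ZMod h) := by
          have h1 : f x = f y - 1 := by rw [hfyx]; ring
          rw [h1, hfy]; push_cast; ring
        have hfy' : f y = i - ((q + 1 : ℕ) : ZMod h) + 1 := by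
          rw [hfy]; push_cast; ring
        rw [if_pos ⟨hfx, hfy'⟩]
  -- minimal p with u p = 0
  have hP : ∃ p, u p = 0 := ⟨h, hnull⟩
  set p := Nat.find hP with hp
  have hup : u p = 0 := Nat.find_spec hP
  have hlt : ∀ q < p, u q ≠ 0 := fun q hq => Nat.find_min hP hq
  have hppos : 0 < p := by
    rcases Nat.eq_zero_or_pos p with h0 | h0
    · rw [h0] at hup
      exact absurd (hu0.symm.trans hup) hv0
    · exact h0
  have hph : p ≤ h := Nat.find_le hnull
  refine ⟨p, hppos, hph, hup, fun q _ hq => hlt q hq, ?_⟩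
  refine ⟨fun k => u (p - 1 - k), ?_, ?_, ?_⟩
  · simpa using hlt (p - 1) (by omega)
  · show A *ᵥ u (p - 1 - 0) = 0
    rw [hstepA]
    have e : p - 1 - 0 + 1 = p := by omega
    rw [e, hup]
  · intro k hk
    show A *ᵥ u (p - 1 - (k + 1)) = u (p - 1 - k)
    rw [hstepA]
    have e : p - 1 - (k + 1) + 1 = p - 1 - k := by omega
    rw [e]
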